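/- Let M = (m_{i,j}) be a k × n real matrix with all entries of row 1 equal to 0, with |m_{i,j} - m_{i,j'}| < N^{i-2}·n for all 2 ≤ i ≤ k-1 and all j, j' (where N = n+1), and with row k strictly decreasing with consecutive gaps |m_{k,j} - m_{k,j'}| ≥ N^{k-2} for all j ≠ j'. Then for every k-subset I = {r_1 < ... < r_k} of [n], every permutation α ∈ S_k minimizing Σ_{i=1}^k m_{i, r_{α(i)}} satisfies α(k) = k. -/
import Mathlib


theorem stmt17 (k n : ℕ) (hk : 2 ≤ k) (hkn : k ≤ n) (M : Fin k → Fin n → ℝ)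
    (h1 : ∀ j : Fin n, M ⟨0, by omega⟩ j = 0)
    (h2 : ∀ i : Fin k, 1 ≤ (i : ℕ) → (i : ℕ) ≤ k - 2 → ∀ j j' : Fin n,
      |M i j - M i j'| < ((n : ℝ) + 1) ^ ((i : ℕ) - 1) * (n : ℝ))
    (h3 : ∀ j j' : Fin n, j < j' → M ⟨k - 1, by omega⟩ j' < M ⟨k - 1, by omega⟩ j)
    (h4 : ∀ j j' : Fin n, j ≠ j' →
      ((n : ℝ) + 1) ^ (k - 2) ≤ |M ⟨k - 1, by omega⟩ j - M ⟨k - 1, by omega⟩ j'|)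
    (r : Fin k → Fin n) (hr : StrictMono r) (α : Equiv.Perm (Fin k))
    (hmin : ∀ β : Equiv.Perm (Fin k), ∑ i : Fin k, M i (r (α i)) ≤ ∑ i : Fin k, M i (r (β i))) :
    α ⟨k - 1, by omega⟩ = ⟨k - 1, by omega⟩ := by
  by_contra hne
  set i0 : Fin k := ⟨k - 1, by omega⟩ with hi0
  set a := α i0 with ha
  have hai : a ≠ i0 := hne
  set j0 := α⁻¹ i0 with hj0
  have hji : j0 ≠ i0 := by
    intro h
    apply hne
    have : α j0 = i0 := by simp [hj0]
    rwa [h] at this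
  set β := α * Equiv.swap i0 j0 with hβ
  have hβi0 : β i0 = i0 := by
    simp [hβ, Equiv.swap_apply_left, hj0]
  have hβj0 : β j0 = a := by
    simp [hβ, Equiv.swap_apply_right, ha]
  have hβo : ∀ i : Fin k, i ≠ i0 → i ≠ j0 → β i = α i := by
    intro i h1' h2'
    simp [hβ, Equiv.swap_apply_of_ne_of_ne h1' h2']
  -- sum comparison
  have key := hmin β
  have hsub : ({i0, j0} : Finset (Fin k)) ⊆ Finset.univ := Finset.subset_univ _
  have hpairα : ∑ i ∈ ({i0, j0} : Finset (Fin k)), M i (r (α i))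
      = M i0 (r a) + M j0 (r i0) := by
    rw [Finset.sum_pair (Ne.symm hji)]
    have : α j0 = i0 := by simp [hj0]
    rw [this, ← ha]
  have hpairβ : ∑ i ∈ ({i0, j0} : Finset (Fin k)), M i (r (β i))
      = M i0 (r i0) + M j0 (r a) := by
    rw [Finset.sum_pair (Ne.symm hji), hβi0, hβj0]
  have hrest : ∑ i ∈ Finset.univ \ ({i0, j0} : Finset (Fin k)), M i (r (α i))
      = ∑ i ∈ Finset.univ \ ({i0, j0} : Finset (Fin k)), M i (r (β i)) := by
    apply Finset.sum_congr rfl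
    intro i hi
    simp only [Finset.mem_sdiff, Finset.mem_insert, Finset.mem_singleton] at hi
    rw [hβo i (fun h => hi.2 (Or.inl h)) (fun h => hi.2 (Or.inr h))]
  have hsplitα := (Finset.sum_sdiff hsub : _ = ∑ i : Fin k, M i (r (α i)))
  have hsplitβ := (Finset.sum_sdiff hsub : _ = ∑ i : Fin k, M i (r (β i)))
  have hmain : M i0 (r a) + M j0 (r i0) ≤ M i0 (r i0) + M j0 (r a) := by
    rw [← hsplitα, ← hsplitβ, hrest, hpairα, hpairβ] at key
    linarith
  -- a < i0
  have hav : (a : ℕ) < k - 1 := by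
    have := a.isLt
    have : (a : ℕ) ≠ k - 1 := by
      intro h
      apply hai
      exact Fin.ext h
    omega
  have hra : r a < r i0 := hr (show a < i0 from hav)
  have hrane : r i0 ≠ r a := fun h => absurd (hr.injective h) (Ne.symm hai)
  have hgap : ((n : ℝ) + 1) ^ (k - 2) ≤ M i0 (r a) - M i0 (r i0) := by
    have h5 := h3 (r a) (r i0) hra
    have h6 := h4 (r i0) (r a) hrane
    rw [abs_sub_comm, abs_of_nonneg (by linarith)] at h6
    exact h6
  -- j0 < i0
  have hjv : (j0 : ℕ) < k - 1 := by
    have := j0.isLt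
    have : (j0 : ℕ) ≠ k - 1 := fun h => hji (Fin.ext h)
    omega
  have hN1 : (1 : ℝ) ≤ (n : ℝ) + 1 := by have : (0:ℝ) ≤ (n:ℝ) := Nat.cast_nonneg n; linarith
  have hNpos : (0 : ℝ) < ((n : ℝ) + 1) ^ (k - 2) := by positivity
  have hjbound : M j0 (r a) - M j0 (r i0) < ((n : ℝ) + 1) ^ (k - 2) := by
    rcases Nat.eq_zero_or_pos (j0 : ℕ) with h0 | hpos
    · have hj00 : j0 = ⟨0, by omega⟩ := Fin.ext h0
      rw [hj00, h1, h1]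
      simpa using hNpos
    · have h7 := h2 j0 hpos (by omega) (r a) (r i0)
      have h8 : M j0 (r a) - M j0 (r i0) ≤ |M j0 (r a) - M j0 (r i0)| := le_abs_self _
      have h9 : ((n : ℝ) + 1) ^ ((j0 : ℕ) - 1) * (n : ℝ)
          < ((n : ℝ) + 1) ^ ((j0 : ℕ) - 1) * ((n : ℝ) + 1) := by
        have : (0 : ℝ) < ((n : ℝ) + 1) ^ ((j0 : ℕ) - 1) := by positivity
        nlinarith
      have h10 : ((n : ℝ) + 1) ^ ((j0 : ℕ) - 1) * ((n : ℝ) + 1)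
          = ((n : ℝ) + 1) ^ ((j0 : ℕ) - 1 + 1) := by ring
      have h11 : ((n : ℝ) + 1) ^ ((j0 : ℕ) - 1 + 1) ≤ ((n : ℝ) + 1) ^ (k - 2) :=
        pow_le_pow_right₀ hN1 (by omega)
      linarith
  linarith
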